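/- Let F : (finite sequences of ℕ) → ℕ be a function such that for all strictly increasing x_1 < ... < x_n we have F(x_1,...,x_n) ≥ max{x_1,...,x_n} + 1. Define f(0) = F(⟨⟩) and f(n) = max{ F(t_1,...,t_j) : t_1 < ... < t_j ≤ n, j ≤ n } for n ≥ 1. Then f is monotone, and for every infinite set X = {x_1 < x_2 < ...} ⊆ ℕ and every N, if x_{n+1} ≤ F(x_1,...,x_n) for all n ≥ N, then x_{N+k} ≤ f^k(x_N) for all k ≥ 1. -/

import Mathlib

open Filter Set

/-- A strategy: maps finite sequences of the opponent's moves to a natural number. -/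
abbrev Strat := List ℕ → ℕ

/-- TWO's move in inning `k` (0-indexed) when following strategy `σ` against ONE's
moves `m`: TWO has seen `m 0, …, m k`. -/
def twoFollow (σ : Strat) (m : ℕ → ℕ) (k : ℕ) : ℕ :=
  σ (List.ofFn fun i : Fin (k + 1) => m i)

/-- ONE's move in inning `k` when following strategy `σ` against TWO's moves `n`:
ONE's move depends on `n 0, …, n (k-1)` (the first move is `σ []`). -/
def oneFollow (σ : Strat) (n : ℕ → ℕ) (k : ℕ) : ℕ :=
  σ (List.ofFn fun i : Fin k => n i)

/-- TWO wins the play `(m 0, n 0, m 1, n 1, …)` of the game `G1(F)`. -/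
def TwoWins1 (F : Set (Set ℕ)) (m n : ℕ → ℕ) : Prop :=
  StrictMono n ∧ (∀ N : ℕ, ∃ k, N ≤ k ∧ m k < n k) ∧ Set.range n ∈ F

/-- TWO wins the play `(m 0, n 0, m 1, n 1, …)` of the game `G2(F)`. -/
def TwoWins2 (F : Set (Set ℕ)) (m n : ℕ → ℕ) : Prop :=
  (∀ᶠ k in Filter.atTop, m k < n k) ∧ Set.range n ∈ F

/-- `σ` is a winning strategy for TWO in `G1(F)`. -/
def TwoWinning1 (F : Set (Set ℕ)) (σ : Strat) : Prop :=
  ∀ m : ℕ → ℕ, TwoWins1 F m (twoFollow σ m)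

/-- `σ` is a winning strategy for ONE in `G1(F)`. -/
def OneWinning1 (F : Set (Set ℕ)) (σ : Strat) : Prop :=
  ∀ n : ℕ → ℕ, ¬ TwoWins1 F (oneFollow σ n) n

/-- `σ` is a winning strategy for TWO in `G2(F)`. -/
def TwoWinning2 (F : Set (Set ℕ)) (σ : Strat) : Prop :=
  ∀ m : ℕ → ℕ, TwoWins2 F m (twoFollow σ m)

/-- `σ` is a winning strategy for ONE in `G2(F)`. -/
def OneWinning2 (F : Set (Set ℕ)) (σ : Strat) : Prop :=
  ∀ n : ℕ → ℕ, ¬ TwoWins2 F (oneFollow σ n) n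

/-- `F` is a non-principal filter on `ℕ`: upward closed, closed under finite
intersections, and every member is infinite. -/
def IsNPFilter (F : Set (Set ℕ)) : Prop :=
  (∀ X ∈ F, ∀ Y : Set ℕ, X ⊆ Y → Y ∈ F) ∧
  (∀ X ∈ F, ∀ Y ∈ F, X ∩ Y ∈ F) ∧
  (∀ X ∈ F, X.Infinite)

/-- `F` is a rare filter: every partition of `ℕ` into disjoint (nonempty) finite sets
admits a selector in `F`. -/
def IsRare (F : Set (Set ℕ)) : Prop :=
  ∀ I : ℕ → Set ℕ, (∀ n, (I n).Finite) → (∀ n, (I n).Nonempty) →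
    (Pairwise fun i j => Disjoint (I i) (I j)) → (⋃ n, I n) = Set.univ →
    ∃ X ∈ F, ∀ n, (X ∩ I n).Subsingleton

/-- The subset of Cantor space `2^ℕ` corresponding to the filter `F`. -/
def cantorCoded (F : Set (Set ℕ)) : Set (ℕ → Bool) :=
  {χ | {n | χ n = true} ∈ F}

/-- The increasing enumeration of `X ⊆ ℕ`. -/
noncomputable def enum (X : Set ℕ) : ℕ → ℕ := Nat.nth (· ∈ X)

/-- `g` eventually dominates `f`. -/
def EvDom (g f : ℕ → ℕ) : Prop := ∀ᶠ k in Filter.atTop, f k < g k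

/-- `fDef F n` is the maximum of `F` over all strictly increasing finite sequences with
entries at most `n` (for `n ≥ 1`), and `fDef F 0 = F []`. Sublists of `[0, …, n]` are
exactly the strictly increasing sequences with entries `≤ n`. -/
def fDef (F : Strat) : ℕ → ℕ
  | 0 => F []
  | (n + 1) => (((List.range (n + 2)).sublists).map F).foldr max 0

lemma mem_le_foldr_max {L : List ℕ} {a : ℕ} (h : a ∈ L) : a ≤ L.foldr max 0 := by
  induction L with
  | nil => simp at h
  | cons b t ih =>
    rcases List.mem_cons.1 h with rfl | h
    · exact le_max_left _ _
    · exact (ih h).trans (le_max_right _ _)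

lemma foldr_max_le {L : List ℕ} {M : ℕ} (h : ∀ a ∈ L, a ≤ M) : L.foldr max 0 ≤ M := by
  induction L with
  | nil => simp
  | cons b t ih =>
    simp only [List.foldr_cons, max_le_iff]
    exact ⟨h b (List.mem_cons_self), ih fun a ha => h a (List.mem_cons_of_mem _ ha)⟩

lemma sub_range {l : List ℕ} (hl : l.Pairwise (· < ·)) {n : ℕ} (h : ∀ a ∈ l, a < n) :
    l.Sublist (List.range n) :=
  List.sublist_of_subperm_of_pairwise (hl.nodup.subperm fun a ha => List.mem_range.2 (h a ha))
    hl (List.pairwise_lt_range (n := n))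

lemma le_fDef (F : Strat) {l : List ℕ} (hl : l.Pairwise (· < ·)) {n : ℕ} (h1 : 1 ≤ n)
    (h : ∀ a ∈ l, a ≤ n) : F l ≤ fDef F n := by
  obtain ⟨m, rfl⟩ := Nat.exists_eq_add_of_le' h1
  apply mem_le_foldr_max
  exact List.mem_map.2 ⟨l, List.mem_sublists.2 (sub_range hl (by
    intro a ha; have := h a ha; omega)), rfl⟩

lemma fDef_mono (F : Strat) : Monotone (fDef F) := by
  apply monotone_nat_of_le_succ
  intro n
  cases n with
  | zero => exact le_fDef F (by simp) le_rfl (by simp)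
  | succ m =>
    apply foldr_max_le
    intro a ha
    obtain ⟨l, hl, rfl⟩ := List.mem_map.1 ha
    have hls := List.mem_sublists.1 hl
    exact le_fDef F ((List.pairwise_lt_range).sublist hls) (by omega)
      fun a ha => by have := List.mem_range.1 (hls.subset ha); omega

/-- The key estimate: if `F` maps each strictly increasing sequence above its maximum,
then `fDef F` is monotone, and whenever `x (n+1) ≤ F (x 0, …, x n)` for all `n ≥ N`,
we get `x (N + k) ≤ (fDef F)^[k] (x N)` for all `k ≥ 1`. (Here, matching the paper's
convention `ℕ = {1, 2, …}`, the enumerated set consists of positive integers.) -/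
theorem stmt18 (F : Strat) (hF : ∀ l : List ℕ, l.Pairwise (· < ·) → ∀ x ∈ l, x < F l) :
    Monotone (fDef F) ∧
    ∀ x : ℕ → ℕ, StrictMono x → 0 < x 0 → ∀ N : ℕ,
      (∀ n, N ≤ n → x (n + 1) ≤ F (List.ofFn fun i : Fin (n + 1) => x i)) →
      ∀ k, 1 ≤ k → x (N + k) ≤ (fDef F)^[k] (x N) := by
  refine ⟨fDef_mono F, ?_⟩
  intro x hx hx0 N hstep
  have key : ∀ n, x (n + 1) ≤ fDef F (x n) → True := fun _ _ => trivial
  have hxpos : ∀ n, 1 ≤ x n := fun n => hx0.trans_le (hx.monotone (Nat.zero_le n))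
  have main : ∀ n, N ≤ n → x (n + 1) ≤ fDef F (x n) := by
    intro n hn
    refine (hstep n hn).trans (le_fDef F ?_ (hxpos n) ?_)
    · exact (List.pairwise_ofFn).2 (hx.comp fun i j h => h)
    · intro a ha
      obtain ⟨i, rfl⟩ := (List.mem_ofFn).1 ha
      exact hx.monotone (Nat.lt_succ_iff.1 i.isLt)
  intro k hk
  induction k, hk using Nat.le_induction with
  | base => simpa using main N le_rfl
  | succ k hk ih =>
    rw [Function.iterate_succ_apply']
    calc x (N + (k + 1)) = x ((N + k) + 1) := by ring_nf
      _ ≤ fDef F (x (N + k)) := main (N + k) (Nat.le_add_right _ _)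
      _ ≤ fDef F ((fDef F)^[k] (x N)) := fDef_mono F ih
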